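/- Cauchy interlacing for consecutive eigenvalues: let M be an n×n real symmetric matrix and M' its top-left (n-1)×(n-1) principal submatrix. Then for each 1 ≤ i ≤ n-1, the eigenvalues (listed in nondecreasing order) satisfy λ_i(M) ≤ λ_i(M') ≤ λ_{i+1}(M). -/

import Mathlib

open Matrix Submodule Module
open scoped RealInnerProductSpace

section aux

variable {ι : Type*} [Fintype ι] [DecidableEq ι]

private lemma quad_eq_sum (A : Matrix ι ι ℝ) (b : OrthonormalBasis ι ℝ (EuclideanSpace ℝ ι))
    (lam : ι → ℝ) (hb : ∀ j, Matrix.toEuclideanLin A (b j) = lam j • b j)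
    (x : EuclideanSpace ℝ ι) :
    ⟪x, Matrix.toEuclideanLin A x⟫ = ∑ j, lam j * (b.repr x j * b.repr x j) := by
  have hx : Matrix.toEuclideanLin A x = ∑ j, (lam j * b.repr x j) • b j := by
    conv_lhs => rw [← b.sum_repr x]
    rw [map_sum]
    refine Finset.sum_congr rfl fun j _ => ?_
    rw [_root_.map_smul, hb, smul_smul, mul_comm]
  rw [hx, inner_sum]
  refine Finset.sum_congr rfl fun j _ => ?_
  rw [real_inner_smul_right, ← real_inner_comm x (b j), ← OrthonormalBasis.repr_apply_apply]
  ring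

private lemma inner_self_eq_sum (b : OrthonormalBasis ι ℝ (EuclideanSpace ℝ ι))
    (x : EuclideanSpace ℝ ι) :
    ⟪x, x⟫ = ∑ j, b.repr x j * b.repr x j := by
  rw [← OrthonormalBasis.sum_inner_mul_inner b x x]
  refine Finset.sum_congr rfl fun j _ => ?_
  rw [← real_inner_comm x (b j), ← OrthonormalBasis.repr_apply_apply]

private lemma repr_zero_of_not_mem (b : OrthonormalBasis ι ℝ (EuclideanSpace ℝ ι))
    {S : Set ι} {x : EuclideanSpace ℝ ι} (hx : x ∈ Submodule.span ℝ (b '' S))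
    {j : ι} (hj : j ∉ S) : b.repr x j = 0 := by
  rw [OrthonormalBasis.repr_apply_apply]
  induction hx using Submodule.span_induction with
  | mem y hy =>
    obtain ⟨k, hk, rfl⟩ := hy
    exact b.orthonormal.2 (fun h => hj (h ▸ hk))
  | zero => simp
  | add y z _ _ hy hz => rw [inner_add_right, hy, hz, add_zero]
  | smul c y _ hy => rw [real_inner_smul_right, hy, mul_zero]

private lemma quad_ge (A : Matrix ι ι ℝ) (b : OrthonormalBasis ι ℝ (EuclideanSpace ℝ ι))
    (lam : ι → ℝ) (hb : ∀ j, Matrix.toEuclideanLin A (b j) = lam j • b j)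
    (S : Set ι) (c : ℝ) (hc : ∀ j ∈ S, c ≤ lam j)
    {x : EuclideanSpace ℝ ι} (hx : x ∈ Submodule.span ℝ (b '' S)) :
    c * ⟪x, x⟫ ≤ ⟪x, Matrix.toEuclideanLin A x⟫ := by
  rw [quad_eq_sum A b lam hb, inner_self_eq_sum b, Finset.mul_sum]
  refine Finset.sum_le_sum fun j _ => ?_
  by_cases hj : j ∈ S
  · exact mul_le_mul_of_nonneg_right (hc j hj) (mul_self_nonneg _)
  · rw [repr_zero_of_not_mem b hx hj]; simp

private lemma quad_le (A : Matrix ι ι ℝ) (b : OrthonormalBasis ι ℝ (EuclideanSpace ℝ ι))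
    (lam : ι → ℝ) (hb : ∀ j, Matrix.toEuclideanLin A (b j) = lam j • b j)
    (S : Set ι) (c : ℝ) (hc : ∀ j ∈ S, lam j ≤ c)
    {x : EuclideanSpace ℝ ι} (hx : x ∈ Submodule.span ℝ (b '' S)) :
    ⟪x, Matrix.toEuclideanLin A x⟫ ≤ c * ⟪x, x⟫ := by
  rw [quad_eq_sum A b lam hb, inner_self_eq_sum b, Finset.mul_sum]
  refine Finset.sum_le_sum fun j _ => ?_
  by_cases hj : j ∈ S
  · exact mul_le_mul_of_nonneg_right (hc j hj) (mul_self_nonneg _)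
  · rw [repr_zero_of_not_mem b hx hj]; simp

private lemma finrank_span_image {E : Type*} [NormedAddCommGroup E] [InnerProductSpace ℝ E]
    {v : ι → E} (hv : Orthonormal ℝ v) (S : Set ι) [Fintype S] :
    finrank ℝ (Submodule.span ℝ (v '' S)) = Fintype.card S := by
  rw [Set.image_eq_range]
  exact finrank_span_eq_card ((hv.comp Subtype.val Subtype.val_injective).linearIndependent)

private lemma exists_ne_zero_mem_inf {V : Type*} [AddCommGroup V] [Module ℝ V]
    [FiniteDimensional ℝ V] {U W : Submodule ℝ V}
    (h : finrank ℝ V < finrank ℝ U + finrank ℝ W) :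
    ∃ x, x ∈ U ⊓ W ∧ x ≠ 0 := by
  have h1 := Submodule.finrank_sup_add_finrank_inf_eq U W
  have h2 : finrank ℝ ↥(U ⊔ W) ≤ finrank ℝ V := Submodule.finrank_le _
  have h3 : 0 < finrank ℝ ↥(U ⊓ W) := by omega
  obtain ⟨y, hy0⟩ := Module.finrank_pos_iff_exists_ne_zero.mp h3
  exact ⟨y.1, y.2, fun h => hy0 (Subtype.ext h)⟩

end aux

noncomputable def padMap (n : ℕ) :
    EuclideanSpace ℝ (Fin n) →ₗ[ℝ] EuclideanSpace ℝ (Fin (n + 1)) where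
  toFun x := (WithLp.equiv 2 _).symm (Fin.snoc ((WithLp.equiv 2 _) x) 0)
  map_add' x y := by
    apply (WithLp.equiv 2 _).injective
    funext i
    cases i using Fin.lastCases with
    | last => simp
    | cast j => simp
  map_smul' c x := by
    apply (WithLp.equiv 2 _).injective
    funext i
    cases i using Fin.lastCases with
    | last => simp
    | cast j => simp

lemma padMap_apply_castSucc {n : ℕ} (x : EuclideanSpace ℝ (Fin n)) (j : Fin n) :
    padMap n x j.castSucc = x j := by
  simp [padMap]

lemma padMap_apply_last {n : ℕ} (x : EuclideanSpace ℝ (Fin n)) :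
    padMap n x (Fin.last n) = 0 := by
  simp [padMap]

lemma padMap_injective (n : ℕ) : Function.Injective (padMap n) := by
  intro x y h
  ext j
  have := congrFun (congrArg (fun z : EuclideanSpace ℝ (Fin (n+1)) => (z : Fin (n+1) → ℝ)) h)
    j.castSucc
  simpa [padMap_apply_castSucc] using this

lemma inner_padMap {n : ℕ} (x y : EuclideanSpace ℝ (Fin n)) :
    ⟪padMap n x, padMap n y⟫ = ⟪x, y⟫ := by
  simp only [PiLp.inner_apply, RCLike.inner_apply, starRingEnd_apply, star_trivial]
  rw [Fin.sum_univ_castSucc]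
  simp [padMap_apply_castSucc, padMap_apply_last]

lemma quad_padMap {n : ℕ} (M : Matrix (Fin (n+1)) (Fin (n+1)) ℝ)
    (x : EuclideanSpace ℝ (Fin n)) :
    ⟪padMap n x, Matrix.toEuclideanLin M (padMap n x)⟫
      = ⟪x, Matrix.toEuclideanLin (M.submatrix Fin.castSucc Fin.castSucc) x⟫ := by
  simp only [PiLp.inner_apply, RCLike.inner_apply, starRingEnd_apply, star_trivial,
    Matrix.toEuclideanLin_apply, PiLp.toLp_apply, Matrix.mulVec, dotProduct,
    Matrix.submatrix_apply]
  rw [Fin.sum_univ_castSucc]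
  simp only [padMap_apply_last, padMap_apply_castSucc, zero_mul, mul_zero, add_zero]
  refine Finset.sum_congr rfl fun j _ => ?_
  congr 1
  rw [Fin.sum_univ_castSucc]
  simp [padMap_apply_castSucc, padMap_apply_last]

theorem stmt4 (n : ℕ) (M : Matrix (Fin (n+1)) (Fin (n+1)) ℝ) (hM : M.IsHermitian)
    (hM' : (M.submatrix Fin.castSucc Fin.castSucc).IsHermitian)
    (σ : Equiv.Perm (Fin (n+1))) (τ : Equiv.Perm (Fin n))
    (hσ : Monotone (hM.eigenvalues ∘ σ)) (hτ : Monotone (hM'.eigenvalues ∘ τ)) :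
    ∀ i : Fin n,
      hM.eigenvalues (σ i.castSucc) ≤ hM'.eigenvalues (τ i) ∧
      hM'.eigenvalues (τ i) ≤ hM.eigenvalues (σ i.succ) := by
  intro i
  have heig : ∀ j, Matrix.toEuclideanLin M (hM.eigenvectorBasis j)
      = hM.eigenvalues j • hM.eigenvectorBasis j := by
    intro j
    apply (WithLp.equiv 2 _).injective
    funext k
    have := congrFun (hM.mulVec_eigenvectorBasis j) k
    simpa [Matrix.toEuclideanLin_apply] using this
  have heig' : ∀ j, Matrix.toEuclideanLin (M.submatrix Fin.castSucc Fin.castSucc)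
        (hM'.eigenvectorBasis j)
      = hM'.eigenvalues j • hM'.eigenvectorBasis j := by
    intro j
    apply (WithLp.equiv 2 _).injective
    funext k
    have := congrFun (hM'.mulVec_eigenvectorBasis j) k
    simpa [Matrix.toEuclideanLin_apply] using this
  have he_on : Orthonormal ℝ (fun j => hM.eigenvectorBasis (σ j)) :=
    hM.eigenvectorBasis.orthonormal.comp σ σ.injective
  have hf_on : Orthonormal ℝ (fun j => hM'.eigenvectorBasis (τ j)) :=
    hM'.eigenvectorBasis.orthonormal.comp τ τ.injective
  constructor
  · -- first inequality
    set U := Submodule.span ℝ (hM.eigenvectorBasis '' (σ '' Set.Ici i.castSucc)) with hU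
    set W0 := Submodule.span ℝ (hM'.eigenvectorBasis '' (τ '' Set.Iic i)) with hW0
    have himU : hM.eigenvectorBasis '' (σ '' Set.Ici i.castSucc)
        = (fun j => hM.eigenvectorBasis (σ j)) '' Set.Ici i.castSucc :=
      Set.image_image _ _ _
    have himW : hM'.eigenvectorBasis '' (τ '' Set.Iic i)
        = (fun j => hM'.eigenvectorBasis (τ j)) '' Set.Iic i :=
      Set.image_image _ _ _
    have hrU : finrank ℝ U = (n+1) - (i.castSucc : ℕ) := by
      rw [hU, himU, finrank_span_image he_on, Fintype.card_ofFinset, Fin.card_Ici]; simp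
    have hrW0 : finrank ℝ W0 = i + 1 := by
      rw [hW0, himW, finrank_span_image hf_on, Fintype.card_ofFinset, Fin.card_Iic]; simp
    obtain ⟨x, ⟨hxU, hxW⟩, hx0⟩ :
        ∃ x, x ∈ U ⊓ Submodule.map (padMap n) W0 ∧ x ≠ 0 := by
      apply exists_ne_zero_mem_inf
      rw [hrU, finrank_euclideanSpace_fin]
      rw [show finrank ℝ (Submodule.map (padMap n) W0) = finrank ℝ W0 from
        (LinearEquiv.finrank_eq
          (Submodule.equivMapOfInjective _ (padMap_injective n) W0)).symm, hrW0]
      have hcs : (i.castSucc : ℕ) = (i : ℕ) := rfl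
      have := i.isLt
      omega
    obtain ⟨y, hyW0, rfl⟩ := hxW
    have hy0 : y ≠ 0 := fun h => hx0 (by rw [h, map_zero])
    have hpos : (0:ℝ) < ⟪y, y⟫ := by
      rw [real_inner_self_eq_norm_sq]
      exact pow_pos (norm_pos_iff.mpr hy0) 2
    have c1 : hM.eigenvalues (σ i.castSucc) * ⟪padMap n y, padMap n y⟫
        ≤ ⟪padMap n y, Matrix.toEuclideanLin M (padMap n y)⟫ := by
      refine quad_ge M _ _ heig (σ '' Set.Ici i.castSucc) _ ?_ hxU
      rintro j ⟨k, hk, rfl⟩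
      exact hσ hk
    have c3 : ⟪y, Matrix.toEuclideanLin (M.submatrix Fin.castSucc Fin.castSucc) y⟫
        ≤ hM'.eigenvalues (τ i) * ⟪y, y⟫ := by
      refine quad_le _ _ _ heig' (τ '' Set.Iic i) _ ?_ hyW0
      rintro j ⟨k, hk, rfl⟩
      exact hτ hk
    rw [inner_padMap, quad_padMap] at c1
    have := c1.trans c3
    exact le_of_mul_le_mul_right this hpos
  · -- second inequality
    set U := Submodule.span ℝ (hM.eigenvectorBasis '' (σ '' Set.Iic i.succ)) with hU
    set W0 := Submodule.span ℝ (hM'.eigenvectorBasis '' (τ '' Set.Ici i)) with hW0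
    have himU : hM.eigenvectorBasis '' (σ '' Set.Iic i.succ)
        = (fun j => hM.eigenvectorBasis (σ j)) '' Set.Iic i.succ :=
      Set.image_image _ _ _
    have himW : hM'.eigenvectorBasis '' (τ '' Set.Ici i)
        = (fun j => hM'.eigenvectorBasis (τ j)) '' Set.Ici i :=
      Set.image_image _ _ _
    have hrU : finrank ℝ U = ((i.succ : Fin (n+1)) : ℕ) + 1 := by
      rw [hU, himU, finrank_span_image he_on, Fintype.card_ofFinset, Fin.card_Iic]; simp
    have hrW0 : finrank ℝ W0 = n - i := by
      rw [hW0, himW, finrank_span_image hf_on, Fintype.card_ofFinset, Fin.card_Ici]; simp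
    obtain ⟨x, ⟨hxU, hxW⟩, hx0⟩ :
        ∃ x, x ∈ U ⊓ Submodule.map (padMap n) W0 ∧ x ≠ 0 := by
      apply exists_ne_zero_mem_inf
      rw [hrU, finrank_euclideanSpace_fin]
      rw [show finrank ℝ (Submodule.map (padMap n) W0) = finrank ℝ W0 from
        (LinearEquiv.finrank_eq
          (Submodule.equivMapOfInjective _ (padMap_injective n) W0)).symm, hrW0]
      have hsc : ((i.succ : Fin (n+1)) : ℕ) = (i : ℕ) + 1 := rfl
      have := i.isLt
      omega
    obtain ⟨y, hyW0, rfl⟩ := hxW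
    have hy0 : y ≠ 0 := fun h => hx0 (by rw [h, map_zero])
    have hpos : (0:ℝ) < ⟪y, y⟫ := by
      rw [real_inner_self_eq_norm_sq]
      exact pow_pos (norm_pos_iff.mpr hy0) 2
    have c1 : ⟪padMap n y, Matrix.toEuclideanLin M (padMap n y)⟫
        ≤ hM.eigenvalues (σ i.succ) * ⟪padMap n y, padMap n y⟫ := by
      refine quad_le M _ _ heig (σ '' Set.Iic i.succ) _ ?_ hxU
      rintro j ⟨k, hk, rfl⟩
      exact hσ hk
    have c3 : hM'.eigenvalues (τ i) * ⟪y, y⟫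
        ≤ ⟪y, Matrix.toEuclideanLin (M.submatrix Fin.castSucc Fin.castSucc) y⟫ := by
      refine quad_ge _ _ _ heig' (τ '' Set.Ici i) _ ?_ hyW0
      rintro j ⟨k, hk, rfl⟩
      exact hτ hk
    rw [inner_padMap, quad_padMap] at c1
    have := c3.trans c1
    exact le_of_mul_le_mul_right this hpos
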